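/- For the 4-periodic boundary law system with $k = 2$: if $2 < \tau \leq 4$, the only solution with $a, b > 0$ to $(a+b-\tau)b^2 + \tau b - 2 = 0$ and $(a+b-\tau)a^2 + \tau a - 2 = 0$ is $a = b = 1$. -/
import Mathlib


theorem stmt_19 (τ a b : ℝ) (hτ₁ : 2 < τ) (hτ₂ : τ ≤ 4) (ha : 0 < a) (hb : 0 < b)
    (h1 : (a + b - τ) * b ^ 2 + τ * b - 2 = 0)
    (h2 : (a + b - τ) * a ^ 2 + τ * a - 2 = 0) :
    a = 1 ∧ b = 1 := by
  have key : (b - a) * ((a + b - τ) * (a + b) + τ) = 0 := by linear_combination h1 - h2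
  rcases mul_eq_zero.mp key with hba | hq
  · have hfac : (a - 1) * (2 * a ^ 2 + (2 - τ) * a + 2) = 0 := by
      linear_combination h2 - a ^ 2 * hba
    have hpos : 2 * a ^ 2 + (2 - τ) * a + 2 > 0 := by nlinarith [sq_nonneg (a - 1)]
    have ha1 : a = 1 := by
      rcases mul_eq_zero.mp hfac with h | h
      · linarith [sub_eq_zero.mp h]
      · linarith
    have hb1 : b = 1 := by linarith [sub_eq_zero.mp hba]
    exact ⟨ha1, hb1⟩
  · have hs1 : 1 < a + b := by nlinarith
    have hs2 : a + b = 2 := by nlinarith [sq_nonneg (a + b - 2)]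
    have hτ : τ = 4 := by nlinarith
    constructor
    · nlinarith [sq_nonneg (a - 1)]
    · nlinarith [sq_nonneg (b - 1)]
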